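/- Let x_1, …, x_n ∈ ℝ^d be unit vectors and let H be the Gram matrix of the Gaussian kernel, H_{ab} = exp(−‖x_a − x_b‖²/2) = Σ_{k=0}^∞ (e^{−1}/k!)(x_a·x_b)^k; assume H is positive definite. Then for any p ≥ 1, β ∈ ℝ^d, and y ∈ ℝⁿ defined by y_a = (β·x_a)^p, one has yᵀ H⁻¹ y ≤ e · p! · ‖β‖^{2p}. -/

import Mathlib

open Matrix
open scoped RealInnerProductSpace

noncomputable def stmtPhi (d k : ℕ) (x : EuclideanSpace ℝ (Fin d)) :
    EuclideanSpace ℝ (Fin k → Fin d) :=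
  WithLp.toLp 2 (fun i => ∏ j, x (i j))

lemma stmt_inner_phi (d k : ℕ) (x x' : EuclideanSpace ℝ (Fin d)) :
    ⟪stmtPhi d k x, stmtPhi d k x'⟫ = ⟪x, x'⟫ ^ k := by
  simp only [stmtPhi, PiLp.inner_apply, PiLp.toLp_apply, RCLike.inner_apply, conj_trivial]
  rw [Finset.sum_pow' Finset.univ (fun t => x' t * x t) k]
  rw [Fintype.piFinset_univ]
  exact Finset.sum_congr rfl fun i _ => by rw [← Finset.prod_mul_distrib]

lemma stmt_gram (n d k : ℕ) (z : Fin n → ℝ) (x : Fin n → EuclideanSpace ℝ (Fin d)) :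
    ∑ a, ∑ c, z a * z c * ⟪x a, x c⟫ ^ k
      = ‖∑ a, z a • stmtPhi d k (x a)‖ ^ 2 := by
  rw [← real_inner_self_eq_norm_sq, sum_inner]
  refine Finset.sum_congr rfl fun a _ => ?_
  rw [inner_sum]
  refine Finset.sum_congr rfl fun c _ => ?_
  rw [real_inner_smul_left, real_inner_smul_right, stmt_inner_phi]
  ring

/-- **Factorial learning bound for monomials with the Gaussian kernel.**
For unit-norm data `x₁, …, xₙ` with positive definite Gaussian Gram matrix
`H_{ab} = exp(-‖x_a - x_b‖²/2)`, any `p ≥ 1`, `β ∈ ℝ^d`, and labels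
`y_a = ⟪β, x_a⟫ᵖ`, one has `yᵀ H⁻¹ y ≤ e · p! · ‖β‖^{2p}`. -/
theorem stmt17 (n d : ℕ) (x : Fin n → EuclideanSpace ℝ (Fin d))
    (hx : ∀ a, ‖x a‖ = 1)
    (H : Matrix (Fin n) (Fin n) ℝ)
    (hH : ∀ a c, H a c = Real.exp (-‖x a - x c‖ ^ 2 / 2))
    (hHpd : H.PosDef)
    (p : ℕ) (hp : 1 ≤ p) (β : EuclideanSpace ℝ (Fin d))
    (y : Fin n → ℝ) (hy : ∀ a, y a = ⟪β, x a⟫ ^ p) :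
    y ⬝ᵥ (H⁻¹ *ᵥ y) ≤
      Real.exp 1 * (Nat.factorial p : ℝ) * ‖β‖ ^ (2 * p) := by
  classical
  have hdet : IsUnit H.det := (Ne.isUnit hHpd.det_pos.ne')
  set z : Fin n → ℝ := H⁻¹ *ᵥ y with hz
  have hHz : H *ᵥ z = y := by
    rw [hz, Matrix.mulVec_mulVec, Matrix.mul_nonsing_inv _ hdet, Matrix.one_mulVec]
  set S : ℝ := y ⬝ᵥ (H⁻¹ *ᵥ y) with hSdef
  have hS1 : S = ∑ a, z a * y a := by
    rw [hSdef, ← hz, dotProduct_comm]; rfl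
  -- exp expansion of the kernel
  have hexp : ∀ u : ℝ, Real.exp u = ∑' k : ℕ, u ^ k / (Nat.factorial k : ℝ) := by
    intro u
    rw [Real.exp_eq_exp_ℝ, NormedSpace.exp_eq_tsum_div]
  have hHac : ∀ a c, H a c
      = Real.exp (-1) * ∑' k : ℕ, ⟪x a, x c⟫ ^ k / (Nat.factorial k : ℝ) := by
    intro a c
    have h1 : -‖x a - x c‖ ^ 2 / 2 = ⟪x a, x c⟫ + (-1) := by
      have h2 : ‖x a - x c‖ ^ 2 = ‖x a‖ ^ 2 - 2 * ⟪x a, x c⟫ + ‖x c‖ ^ 2 :=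
        norm_sub_sq_real (x a) (x c)
      rw [hx a, hx c] at h2
      rw [h2]; ring
    rw [hH, h1, Real.exp_add, hexp ⟪x a, x c⟫, mul_comm]
  -- the coefficient sequence
  set Q : ℕ → ℝ := fun k => ∑ a, ∑ c,
      z a * z c * (⟪x a, x c⟫ ^ k / (Nat.factorial k : ℝ)) with hQdef
  have hsumm : ∀ a c : Fin n,
      Summable (fun k : ℕ => z a * z c * (⟪x a, x c⟫ ^ k / (Nat.factorial k : ℝ))) :=
    fun a c => (Real.summable_pow_div_factorial _).mul_left _
  have hsummc : ∀ a : Fin n, Summable (fun k : ℕ => ∑ c,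
      z a * z c * (⟪x a, x c⟫ ^ k / (Nat.factorial k : ℝ))) :=
    fun a => summable_sum fun c _ => hsumm a c
  have hQsum : Summable Q := summable_sum fun a _ => hsummc a
  have hQnonneg : ∀ k, 0 ≤ Q k := by
    intro k
    have h := stmt_gram n d k z x
    have h2 : Q k = (∑ a, ∑ c, z a * z c * ⟪x a, x c⟫ ^ k) / (Nat.factorial k : ℝ) := by
      rw [hQdef, Finset.sum_div]
      refine Finset.sum_congr rfl fun a _ => ?_
      rw [Finset.sum_div]
      exact Finset.sum_congr rfl fun c _ => by ring
    rw [h2, h]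
    positivity
  -- S as a series
  have hSz : S = Real.exp (-1) * ∑' k, Q k := by
    have h0 : S = z ⬝ᵥ (H *ᵥ z) := by
      rw [hHz, hSdef, ← hz, dotProduct_comm]
    have h1 : z ⬝ᵥ (H *ᵥ z)
        = ∑ a, ∑ c, Real.exp (-1) * ∑' k : ℕ,
            z a * z c * (⟪x a, x c⟫ ^ k / (Nat.factorial k : ℝ)) := by
      simp only [dotProduct, Matrix.mulVec, Finset.mul_sum]
      refine Finset.sum_congr rfl fun a _ => Finset.sum_congr rfl fun c _ => ?_
      rw [hHac a c, tsum_mul_left]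
      ring
    have h2 : ∑' k, Q k = ∑ a, ∑ c, ∑' k : ℕ,
        z a * z c * (⟪x a, x c⟫ ^ k / (Nat.factorial k : ℝ)) := by
      rw [hQdef]
      rw [Summable.tsum_finsetSum fun a _ => hsummc a]
      exact Finset.sum_congr rfl fun a _ => Summable.tsum_finsetSum fun c _ => hsumm a c
    rw [h0, h1, h2]
    simp only [Finset.mul_sum]
  have key : Real.exp (-1) * Q p ≤ S := by
    rw [hSz]
    exact mul_le_mul_of_nonneg_left (Summable.le_tsum hQsum p fun j _ => hQnonneg j)
      (Real.exp_pos _).le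
  -- feature vectors
  set w : EuclideanSpace ℝ (Fin p → Fin d) := stmtPhi d p β with hw
  set v : EuclideanSpace ℝ (Fin p → Fin d) := ∑ a, z a • stmtPhi d p (x a) with hv
  have hSv : S = ⟪w, v⟫ := by
    rw [hS1, hv, inner_sum]
    refine Finset.sum_congr rfl fun a _ => ?_
    rw [real_inner_smul_right, hw, stmt_inner_phi, hy a]
  have hQp : Q p = ‖v‖ ^ 2 / (Nat.factorial p : ℝ) := by
    rw [hQdef, ← stmt_gram n d p z x, Finset.sum_div]
    refine Finset.sum_congr rfl fun a _ => ?_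
    rw [Finset.sum_div]
    exact Finset.sum_congr rfl fun c _ => by ring
  have hfacpos : (0:ℝ) < (Nat.factorial p : ℝ) := by
    exact_mod_cast Nat.factorial_pos p
  have hv2 : ‖v‖ ^ 2 ≤ Real.exp 1 * (Nat.factorial p : ℝ) * S := by
    have h := key
    rw [hQp, Real.exp_neg] at h
    have hepos : (0:ℝ) < Real.exp 1 := Real.exp_pos 1
    have h3 : Real.exp 1 * (Nat.factorial p : ℝ) *
        ((Real.exp 1)⁻¹ * (‖v‖ ^ 2 / (Nat.factorial p : ℝ))) = ‖v‖ ^ 2 := by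
      field_simp
    have h4 := mul_le_mul_of_nonneg_left h
      (show (0:ℝ) ≤ Real.exp 1 * (Nat.factorial p : ℝ) by positivity)
    linarith [h4, h3]
  have hw2 : ‖w‖ ^ 2 = ‖β‖ ^ (2 * p) := by
    rw [← real_inner_self_eq_norm_sq, hw, stmt_inner_phi,
      real_inner_self_eq_norm_sq, ← pow_mul]
  rcases le_or_gt S 0 with hS0 | hSpos
  · refine le_trans hS0 ?_
    positivity
  · have hcs : S ≤ ‖w‖ * ‖v‖ := hSv ▸ real_inner_le_norm w v
    have h2 : S * S ≤ (‖w‖ * ‖v‖) * (‖w‖ * ‖v‖) :=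
      mul_le_mul hcs hcs hSpos.le (by positivity)
    have h3 : S * S ≤ ‖β‖ ^ (2 * p) * (Real.exp 1 * (Nat.factorial p : ℝ) * S) := by
      have h4 : (‖w‖ * ‖v‖) * (‖w‖ * ‖v‖) = ‖w‖ ^ 2 * ‖v‖ ^ 2 := by ring
      rw [h4, hw2] at h2
      exact h2.trans (mul_le_mul_of_nonneg_left hv2 (by positivity))
    have h5 : S * S ≤ (Real.exp 1 * (Nat.factorial p : ℝ) * ‖β‖ ^ (2 * p)) * S := by
      linarith [h3]
    exact le_of_mul_le_mul_right h5 hSpos
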